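/- Let A, B be finite sets of integers and N a positive integer. For each divisor m of N let A_m be the number of pairs (a,a') in A×A with gcd(a-a', N) = m (with the convention gcd(N,0)=N), and similarly B_m for B. For each divisor d of N let 𝒜_d be the sum of |A(ξ)|² over all primitive d-th roots of unity ξ, where A(x)=∑_{a∈A} x^a, and similarly ℬ_d. Then ∑_{m|N} A_m B_m / φ(N/m) = (1/N) ∑_{d|N} 𝒜_d ℬ_d / φ(d), where φ is Euler's totient function. -/

import Mathlib

open Finset Complex

namespace Stmt0Aux

noncomputable def c (d : ℕ) (k : ℤ) : ℂ := ∑ ξ ∈ primitiveRoots d ℂ, ξ ^ k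

lemma isPrim {d : ℕ} (hd : 0 < d) {ξ : ℂ} (hξ : ξ ∈ primitiveRoots d ℂ) :
    IsPrimitiveRoot ξ d := (mem_primitiveRoots hd).mp hξ

lemma prim_ne_zero {d : ℕ} (hd : 0 < d) {ξ : ℂ} (hξ : ξ ∈ primitiveRoots d ℂ) : ξ ≠ 0 :=
  (isPrim hd hξ).ne_zero hd.ne'

lemma zpow_congr {d : ℕ} (hd : 0 < d) {ξ : ℂ} (hξ : ξ ∈ primitiveRoots d ℂ)
    {k l : ℤ} (h : (d : ℤ) ∣ k - l) : ξ ^ k = ξ ^ l := by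
  have h1 : ξ ^ (k - l) = 1 := ((isPrim hd hξ).zpow_eq_one_iff_dvd _).mpr h
  have h0 := prim_ne_zero hd hξ
  have : ξ ^ (k - l) * ξ ^ l = ξ ^ l := by rw [h1, one_mul]
  rw [← zpow_add₀ h0, sub_add_cancel] at this
  exact this

lemma pow_congr_nat {d : ℕ} (hd : 0 < d) {ξ : ℂ} (hξ : ξ ∈ primitiveRoots d ℂ)
    {a b : ℕ} (h : a ≡ b [MOD d]) : ξ ^ a = ξ ^ b := by
  have h2 : (d : ℤ) ∣ (a : ℤ) - (b : ℤ) := (Int.natCast_modEq_iff.mpr h).symm.dvd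
  have := zpow_congr hd hξ h2
  simpa using this

lemma int_gcd_congr {n a b : ℤ} (h : n ∣ a - b) : Int.gcd a n = Int.gcd b n := by
  apply Nat.dvd_antisymm
  · rw [← Int.natCast_dvd_natCast]
    apply Int.dvd_coe_gcd _ (Int.gcd_dvd_right _ _)
    have h1 : (Int.gcd a n : ℤ) ∣ a - b := dvd_trans (Int.gcd_dvd_right _ _) h
    have h2 : (Int.gcd a n : ℤ) ∣ a := Int.gcd_dvd_left _ _
    have := dvd_sub h2 h1
    simpa using this
  · rw [← Int.natCast_dvd_natCast]
    apply Int.dvd_coe_gcd _ (Int.gcd_dvd_right _ _)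
    have h1 : (Int.gcd b n : ℤ) ∣ a - b := dvd_trans (Int.gcd_dvd_right _ _) h
    have h2 : (Int.gcd b n : ℤ) ∣ b := Int.gcd_dvd_left _ _
    have := dvd_add h2 h1
    simpa using this

lemma c_eq_c_gcd {d : ℕ} (hd : 0 < d) (k : ℤ) : c d k = c d (Int.gcd k d : ℤ) := by
  have : NeZero d := ⟨hd.ne'⟩
  obtain ⟨g, hgd, u, hu, ha⟩ := ZMod.eq_unit_mul_divisor (k : ZMod d)
  obtain ⟨w, rfl⟩ := hu
  set uv : ℕ := ((w : (ZMod d)ˣ) : ZMod d).val with huv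
  set vv : ℕ := ((w⁻¹ : (ZMod d)ˣ) : ZMod d).val with hvv
  have hu_cop : Nat.Coprime uv d := ZMod.val_coe_unit_coprime w
  have hv_cop : Nat.Coprime vv d := ZMod.val_coe_unit_coprime w⁻¹
  have huvv : uv * vv ≡ 1 [MOD d] := by
    have : ((uv * vv : ℕ) : ZMod d) = ((1 : ℕ) : ZMod d) := by
      push_cast
      rw [huv, hvv, ZMod.natCast_val, ZMod.natCast_val, ZMod.cast_id, ZMod.cast_id]
      exact_mod_cast w.mul_inv
    exact (ZMod.natCast_eq_natCast_iff _ _ _).mp this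
  have hmod : (d : ℤ) ∣ k - (uv * g : ℕ) := by
    have hcast : ((k : ZMod d)) = (((uv * g : ℕ) : ℤ) : ZMod d) := by
      push_cast
      rw [ZMod.natCast_val, ZMod.cast_id]
      exact ha
    exact ((ZMod.intCast_eq_intCast_iff _ _ _).mp hcast).symm.dvd
  have hgk : Int.gcd k d = g := by
    rw [int_gcd_congr hmod]
    have : Int.gcd ((uv * g : ℕ) : ℤ) ((d : ℕ) : ℤ) = Nat.gcd (uv * g) d := by
      simp [Int.gcd_def, Int.natAbs_mul]
    rw [this, hu_cop.gcd_mul_left_cancel, Nat.gcd_eq_left hgd]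
  rw [hgk]
  unfold c
  have step1 : ∀ ξ ∈ primitiveRoots d ℂ, ξ ^ k = (ξ ^ uv) ^ g := by
    intro ξ hξ
    rw [zpow_congr hd hξ hmod, zpow_natCast, pow_mul]
  rw [Finset.sum_congr rfl step1]
  have huvmem : ∀ ξ ∈ primitiveRoots d ℂ, ξ ^ uv ∈ primitiveRoots d ℂ := fun ξ hξ =>
    (mem_primitiveRoots hd).mpr ((isPrim hd hξ).pow_of_coprime uv hu_cop)
  have hvvmem : ∀ ξ ∈ primitiveRoots d ℂ, ξ ^ vv ∈ primitiveRoots d ℂ := fun ξ hξ =>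
    (mem_primitiveRoots hd).mpr ((isPrim hd hξ).pow_of_coprime vv hv_cop)
  have hinv1 : ∀ ξ ∈ primitiveRoots d ℂ, (ξ ^ uv) ^ vv = ξ := by
    intro ξ hξ
    rw [← pow_mul]
    have := pow_congr_nat hd hξ huvv
    rwa [pow_one] at this
  have hinv2 : ∀ ξ ∈ primitiveRoots d ℂ, (ξ ^ vv) ^ uv = ξ := by
    intro ξ hξ
    rw [← pow_mul]
    have h' : vv * uv ≡ 1 [MOD d] := by rwa [Nat.mul_comm] at huvv
    have := pow_congr_nat hd hξ h'
    rwa [pow_one] at this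
  refine Finset.sum_nbij' (fun ξ => ξ ^ uv) (fun ξ => ξ ^ vv) ?_ ?_ ?_ ?_ ?_
  · exact huvmem
  · exact hvvmem
  · exact hinv1
  · exact hinv2
  · intro ξ hξ
    rw [zpow_natCast]

end Stmt0Aux

namespace Stmt0Aux
open Finset Complex

lemma card_gcd_fiber {N m : ℕ} (hN : 0 < N) (hm : m ∣ N) :
    ((Finset.range N).filter (fun j => Nat.gcd j N = m)).card = Nat.totient (N / m) := by
  have hm0 : 0 < m := Nat.pos_of_dvd_of_pos hm hN
  rw [Nat.totient_eq_card_coprime]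
  apply Finset.card_bij' (i := fun j _ => j / m) (j := fun u _ => m * u)
  · intro j hj
    rw [Finset.mem_filter, Finset.mem_range] at hj
    obtain ⟨hjN, hgcd⟩ := hj
    have hmj : m ∣ j := hgcd ▸ Nat.gcd_dvd_left j N
    rw [Finset.mem_filter, Finset.mem_range]
    constructor
    · exact Nat.div_lt_div_of_lt_of_dvd hm hjN
    · have := Nat.gcd_div hmj hm
      rw [hgcd, Nat.div_self hm0] at this
      rw [Nat.Coprime, Nat.gcd_comm]
      exact this
  · intro u hu
    rw [Finset.mem_filter, Finset.mem_range] at hu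
    obtain ⟨huN, hcop⟩ := hu
    rw [Finset.mem_filter, Finset.mem_range]
    constructor
    · calc m * u < m * (N / m) := (Nat.mul_lt_mul_left hm0).mpr huN
      _ = N := Nat.mul_div_cancel' hm
    · have h2 : N = m * (N / m) := (Nat.mul_div_cancel' hm).symm
      rw [h2, Nat.gcd_mul_left]
      rw [Nat.Coprime, Nat.gcd_comm] at hcop
      rw [hcop, Nat.mul_one]
  · intro j hj
    rw [Finset.mem_filter] at hj
    have hmj : m ∣ j := hj.2 ▸ Nat.gcd_dvd_left j N
    exact Nat.mul_div_cancel' hmj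
  · intro u hu
    exact Nat.mul_div_cancel_left u hm0

lemma pow_N_eq_one {N d : ℕ} (hd0 : 0 < d) (hdN : d ∣ N) {ξ : ℂ}
    (hξ : ξ ∈ primitiveRoots d ℂ) : ξ ^ N = 1 := by
  obtain ⟨t, rfl⟩ := hdN
  rw [pow_mul, (isPrim hd0 hξ).pow_eq_one, one_pow]

lemma ortho_range {N d e : ℕ} (hN : 0 < N) (hd : d ∣ N) (he : e ∣ N)
    (hd0 : 0 < d) (he0 : 0 < e) :
    ∑ j ∈ Finset.range N, c d (j : ℤ) * c e (j : ℤ)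
      = if d = e then (N * Nat.totient d : ℂ) else 0 := by
  unfold c
  have step1 : ∀ j : ℕ, (∑ ξ ∈ primitiveRoots d ℂ, ξ ^ (j : ℤ)) *
      (∑ η ∈ primitiveRoots e ℂ, η ^ (j : ℤ))
      = ∑ ξ ∈ primitiveRoots d ℂ, ∑ η ∈ primitiveRoots e ℂ, (ξ * η) ^ j := by
    intro j
    rw [Finset.sum_mul_sum]
    refine Finset.sum_congr rfl fun ξ _ => Finset.sum_congr rfl fun η _ => ?_
    rw [mul_pow, zpow_natCast, zpow_natCast]
  rw [Finset.sum_congr rfl fun j _ => step1 j]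
  rw [Finset.sum_comm]
  have step2 : ∀ ξ ∈ primitiveRoots d ℂ,
      ∑ j ∈ Finset.range N, ∑ η ∈ primitiveRoots e ℂ, (ξ * η) ^ j
      = ∑ η ∈ primitiveRoots e ℂ, (if η = ξ⁻¹ then (N : ℂ) else 0) := by
    intro ξ hξ
    rw [Finset.sum_comm]
    refine Finset.sum_congr rfl fun η hη => ?_
    by_cases h : η = ξ⁻¹
    · subst h
      rw [mul_inv_cancel₀ (prim_ne_zero hd0 hξ)]
      simp
    · rw [if_neg h]
      have hne : ξ * η ≠ 1 := by
        intro hcon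
        exact h (eq_inv_of_mul_eq_one_right hcon)
      have hpow : (ξ * η) ^ N = 1 := by
        rw [mul_pow, pow_N_eq_one hd0 hd hξ, pow_N_eq_one he0 he hη, one_mul]
      rw [geom_sum_eq hne, hpow, sub_self, zero_div]
  rw [Finset.sum_congr rfl step2]
  have step3 : ∀ ξ ∈ primitiveRoots d ℂ,
      (∑ η ∈ primitiveRoots e ℂ, (if η = ξ⁻¹ then (N : ℂ) else 0))
      = if ξ⁻¹ ∈ primitiveRoots e ℂ then (N : ℂ) else 0 := by
    intro ξ hξ
    rw [Finset.sum_ite_eq' (primitiveRoots e ℂ) ξ⁻¹ (fun _ => (N : ℂ))]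
  rw [Finset.sum_congr rfl step3]
  by_cases hde : d = e
  · subst hde
    rw [if_pos rfl]
    have : ∀ ξ ∈ primitiveRoots d ℂ, ξ⁻¹ ∈ primitiveRoots d ℂ := fun ξ hξ =>
      (mem_primitiveRoots hd0).mpr (isPrim hd0 hξ).inv
    rw [Finset.sum_congr rfl fun ξ hξ => if_pos (this ξ hξ)]
    rw [Finset.sum_const, Complex.card_primitiveRoots]
    push_cast
    ring
  · rw [if_neg hde]
    have : ∀ ξ ∈ primitiveRoots d ℂ, ξ⁻¹ ∉ primitiveRoots e ℂ := by
      intro ξ hξ hcon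
      exact hde (((isPrim hd0 hξ).inv).unique (isPrim he0 hcon))
    rw [Finset.sum_congr rfl fun ξ hξ => if_neg (this ξ hξ), Finset.sum_const_zero]

lemma c_gcdN_int {N d : ℕ} (hd0 : 0 < d) (hdN : d ∣ N) (k : ℤ) :
    c d k = c d ((Int.gcd k N : ℕ) : ℤ) := by
  rw [c_eq_c_gcd hd0 k, c_eq_c_gcd hd0 ((Int.gcd k N : ℕ) : ℤ)]
  congr 2
  have h1 : Int.gcd ((Int.gcd k N : ℕ) : ℤ) (d : ℤ) = Nat.gcd (Nat.gcd k.natAbs N) d := by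
    simp [Int.gcd_def]
  have h2 : Int.gcd k (d : ℤ) = Nat.gcd k.natAbs d := by simp [Int.gcd_def]
  rw [h1, h2, Nat.gcd_assoc, Nat.gcd_eq_right hdN]

lemma c_gcdN_nat {N d : ℕ} (hd0 : 0 < d) (hdN : d ∣ N) (j : ℕ) :
    c d (j : ℤ) = c d ((Nat.gcd j N : ℕ) : ℤ) := by
  rw [c_gcdN_int hd0 hdN (j : ℤ)]
  congr 2

lemma ortho_div {N d e : ℕ} (hN : 0 < N) (hdN : d ∈ N.divisors) (heN : e ∈ N.divisors) :
    ∑ m ∈ N.divisors, (Nat.totient (N / m) : ℂ) * (c d (m : ℤ) * c e (m : ℤ))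
      = if d = e then (N * Nat.totient d : ℂ) else 0 := by
  obtain ⟨hd, _⟩ := Nat.mem_divisors.mp hdN
  obtain ⟨he, _⟩ := Nat.mem_divisors.mp heN
  have hd0 : 0 < d := Nat.pos_of_dvd_of_pos hd hN
  have he0 : 0 < e := Nat.pos_of_dvd_of_pos he hN
  rw [← ortho_range hN hd he hd0 he0]
  have hmaps : ∀ j ∈ Finset.range N, Nat.gcd j N ∈ N.divisors :=
    fun j _ => Nat.mem_divisors.mpr ⟨Nat.gcd_dvd_right j N, hN.ne'⟩
  rw [← Finset.sum_fiberwise_of_maps_to hmaps (fun j => c d (j : ℤ) * c e (j : ℤ))]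
  refine Finset.sum_congr rfl fun m hm => ?_
  obtain ⟨hmdvd, _⟩ := Nat.mem_divisors.mp hm
  have hinner : ∀ j ∈ (Finset.range N).filter (fun j => Nat.gcd j N = m),
      c d (j : ℤ) * c e (j : ℤ) = c d (m : ℤ) * c e (m : ℤ) := by
    intro j hj
    obtain ⟨-, hgcd⟩ := Finset.mem_filter.mp hj
    rw [c_gcdN_nat hd0 hd j, c_gcdN_nat he0 he j, hgcd]
  rw [Finset.sum_congr rfl hinner, Finset.sum_const, card_gcd_fiber hN hmdvd, nsmul_eq_mul]

lemma totient_Ndiv_ne_zero {N m : ℕ} (hN : 0 < N) (hm : m ∣ N) :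
    (Nat.totient (N / m) : ℂ) ≠ 0 := by
  have h0 : 0 < N / m := Nat.div_pos (Nat.le_of_dvd hN hm) (Nat.pos_of_dvd_of_pos hm hN)
  exact_mod_cast Nat.cast_ne_zero.mpr (Nat.totient_pos.mpr h0).ne'

lemma ortho_cols {N : ℕ} (hN : 0 < N) {m n : ℕ} (hm : m ∈ N.divisors) (hn : n ∈ N.divisors) :
    ∑ d ∈ N.divisors, c d (m : ℤ) * c d (n : ℤ) / (Nat.totient d : ℂ)
      = if m = n then (N : ℂ) / (Nat.totient (N / m) : ℂ) else 0 := by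
  classical
  have hNne : (N : ℂ) ≠ 0 := Nat.cast_ne_zero.mpr hN.ne'
  have htot : ∀ d ∈ N.divisors, (Nat.totient d : ℂ) ≠ 0 := by
    intro d hd
    obtain ⟨hdvd, -⟩ := Nat.mem_divisors.mp hd
    exact_mod_cast Nat.cast_ne_zero.mpr
      (Nat.totient_pos.mpr (Nat.pos_of_dvd_of_pos hdvd hN)).ne'
  set α := {x // x ∈ N.divisors} with hα
  let M1 : Matrix α α ℂ := fun d m => c d.1 (m.1 : ℤ)
  let M2 : Matrix α α ℂ := fun m d =>
    (Nat.totient (N / m.1) : ℂ) * c d.1 (m.1 : ℤ) / ((N : ℂ) * (Nat.totient d.1 : ℂ))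
  have h12 : M1 * M2 = 1 := by
    ext d e
    rw [Matrix.mul_apply, Matrix.one_apply]
    simp only [M1, M2]
    rw [Finset.univ_eq_attach]
    have : ∑ x ∈ N.divisors.attach,
        c d.1 (x.1 : ℤ) * ((Nat.totient (N / x.1) : ℂ) * c e.1 (x.1 : ℤ)
          / ((N : ℂ) * (Nat.totient e.1 : ℂ)))
        = (∑ x ∈ N.divisors, (Nat.totient (N / x) : ℂ) * (c d.1 (x : ℤ) * c e.1 (x : ℤ)))
          / ((N : ℂ) * (Nat.totient e.1 : ℂ)) := by
      rw [Finset.sum_div]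
      rw [← Finset.sum_attach N.divisors (fun x => (Nat.totient (N / x) : ℂ) *
        (c d.1 (x : ℤ) * c e.1 (x : ℤ)) / ((N : ℂ) * (Nat.totient e.1 : ℂ)))]
      refine Finset.sum_congr rfl fun x _ => ?_
      ring
    rw [this, ortho_div hN d.2 e.2]
    by_cases hde : d = e
    · rw [if_pos hde, if_pos (by rw [hde]), hde,
        div_self (mul_ne_zero hNne (htot e.1 e.2))]
    · rw [if_neg (fun h => hde (Subtype.ext h)), if_neg hde, zero_div]
  have h21 : M2 * M1 = 1 := mul_eq_one_comm.mp h12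
  have hentry := congrFun (congrFun h21 ⟨m, hm⟩) ⟨n, hn⟩
  rw [Matrix.mul_apply, Matrix.one_apply] at hentry
  simp only [M1, M2] at hentry
  rw [Finset.univ_eq_attach] at hentry
  rw [Finset.sum_attach N.divisors (fun d =>
    (Nat.totient (N / m) : ℂ) * c d (m : ℤ) / ((N : ℂ) * (Nat.totient d : ℂ)) * c d (n : ℤ))]
    at hentry
  have hmn : (⟨m, hm⟩ : α) = ⟨n, hn⟩ ↔ m = n := Subtype.mk_eq_mk
  have hφm := totient_Ndiv_ne_zero hN (Nat.mem_divisors.mp hm).1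
  -- multiply hentry by N / φ(N/m)
  have := congrArg (fun z => (N : ℂ) / (Nat.totient (N / m) : ℂ) * z) hentry
  rw [Finset.mul_sum] at this
  have hterm : ∀ d ∈ N.divisors,
      (N : ℂ) / (Nat.totient (N / m) : ℂ) *
        ((Nat.totient (N / m) : ℂ) * c d (m : ℤ) / ((N : ℂ) * (Nat.totient d : ℂ)) * c d (n : ℤ))
      = c d (m : ℤ) * c d (n : ℤ) / (Nat.totient d : ℂ) := by
    intro d hd
    have hφd := htot d hd
    field_simp
  rw [Finset.sum_congr rfl hterm] at this
  rw [this]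
  by_cases h : m = n
  · rw [if_pos h, if_pos (hmn.mpr h), mul_one]
  · rw [if_neg h, if_neg (fun hc => h (hmn.mp hc)), mul_zero]

lemma abs_one_of_prim {d : ℕ} (hd0 : 0 < d) {ξ : ℂ} (hξ : ξ ∈ primitiveRoots d ℂ) :
    ‖ξ‖ = 1 :=
  Complex.norm_eq_one_of_pow_eq_one (isPrim hd0 hξ).pow_eq_one hd0.ne'

lemma absSum_eq {N d : ℕ} (hN : 0 < N) (hd : d ∈ N.divisors) (S : Finset ℤ) :
    ((∑ ξ ∈ primitiveRoots d ℂ, (‖∑ a ∈ S, ξ ^ a‖) ^ 2 : ℝ) : ℂ)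
      = ∑ m ∈ N.divisors,
          ((((S ×ˢ S).filter (fun p => Int.gcd (p.1 - p.2) N = m)).card : ℂ)) * c d (m : ℤ) := by
  obtain ⟨hdvd, -⟩ := Nat.mem_divisors.mp hd
  have hd0 : 0 < d := Nat.pos_of_dvd_of_pos hdvd hN
  push_cast
  have step1 : ∀ ξ ∈ primitiveRoots d ℂ,
      ((‖∑ a ∈ S, ξ ^ a‖ : ℂ)) ^ 2 = ∑ p ∈ S ×ˢ S, ξ ^ (p.1 - p.2) := by
    intro ξ hξ
    have hξ0 := prim_ne_zero hd0 hξ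
    have h1 : ((‖∑ a ∈ S, ξ ^ a‖ : ℂ)) ^ 2
        = (∑ a ∈ S, ξ ^ a) * (starRingEnd ℂ) (∑ a ∈ S, ξ ^ a) := by
      rw [Complex.mul_conj]
      norm_cast
      rw [Complex.sq_norm]
    rw [h1, map_sum]
    have h2 : ∀ a ∈ S, (starRingEnd ℂ) (ξ ^ a) = ξ ^ (-a) := by
      intro a _
      rw [map_zpow₀, ← Complex.inv_eq_conj (abs_one_of_prim hd0 hξ), zpow_neg, inv_zpow]
    rw [Finset.sum_congr rfl h2, Finset.sum_mul_sum]
    rw [Finset.sum_product]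
    refine Finset.sum_congr rfl fun a _ => Finset.sum_congr rfl fun b _ => ?_
    rw [← zpow_add₀ hξ0, sub_eq_add_neg]
  rw [Finset.sum_congr rfl step1, Finset.sum_comm]
  have hmaps : ∀ p ∈ S ×ˢ S, Int.gcd (p.1 - p.2) N ∈ N.divisors := by
    intro p _
    refine Nat.mem_divisors.mpr ⟨?_, hN.ne'⟩
    have : Int.gcd (p.1 - p.2) (N : ℤ) = Nat.gcd (p.1 - p.2).natAbs N := rfl
    rw [this]
    exact Nat.gcd_dvd_right _ _
  rw [← Finset.sum_fiberwise_of_maps_to hmaps (fun p => ∑ ξ ∈ primitiveRoots d ℂ, ξ ^ (p.1 - p.2))]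
  refine Finset.sum_congr rfl fun m hm => ?_
  have hinner : ∀ p ∈ (S ×ˢ S).filter (fun p => Int.gcd (p.1 - p.2) N = m),
      (∑ ξ ∈ primitiveRoots d ℂ, ξ ^ (p.1 - p.2)) = c d (m : ℤ) := by
    intro p hp
    obtain ⟨-, hgcd⟩ := Finset.mem_filter.mp hp
    have : (∑ ξ ∈ primitiveRoots d ℂ, ξ ^ (p.1 - p.2)) = c d (p.1 - p.2) := rfl
    rw [this, c_gcdN_int hd0 hdvd, hgcd]
  rw [Finset.sum_congr rfl hinner, Finset.sum_const, nsmul_eq_mul]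

lemma absSum_eq' {N d : ℕ} (hN : 0 < N) (hd : d ∈ N.divisors) (S : Finset ℤ) :
    (∑ ξ ∈ primitiveRoots d ℂ, ((‖∑ a ∈ S, ξ ^ a‖ : ℝ) : ℂ) ^ 2)
      = ∑ m ∈ N.divisors,
          ((((S ×ˢ S).filter (fun p => Int.gcd (p.1 - p.2) N = m)).card : ℂ)) * c d (m : ℤ) := by
  rw [← absSum_eq hN hd S]
  norm_cast

end Stmt0Aux

open Stmt0Aux in
theorem stmt_0 (N : ℕ) (hN : 0 < N) (A B : Finset ℤ) :
    ∑ m ∈ N.divisors,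
      ((((A ×ˢ A).filter (fun p => Int.gcd (p.1 - p.2) N = m)).card *
        ((B ×ˢ B).filter (fun p => Int.gcd (p.1 - p.2) N = m)).card : ℝ) /
          (Nat.totient (N / m)))
    = (1 / N) * ∑ d ∈ N.divisors,
        ((∑ ξ ∈ primitiveRoots d ℂ, (‖∑ a ∈ A, ξ ^ a‖) ^ 2) *
         (∑ ξ ∈ primitiveRoots d ℂ, (‖∑ b ∈ B, ξ ^ b‖) ^ 2)) /
          (Nat.totient d) := by
  classical
  have hNne : (N : ℂ) ≠ 0 := Nat.cast_ne_zero.mpr hN.ne'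
  set cA : ℕ → ℂ := fun m =>
    (((A ×ˢ A).filter (fun p => Int.gcd (p.1 - p.2) N = m)).card : ℂ) with hcA
  set cB : ℕ → ℂ := fun m =>
    (((B ×ˢ B).filter (fun p => Int.gcd (p.1 - p.2) N = m)).card : ℂ) with hcB
  apply Complex.ofReal_inj.mp
  push_cast
  have hrw : ∀ d ∈ N.divisors,
      (∑ ξ ∈ primitiveRoots d ℂ, ((‖∑ a ∈ A, ξ ^ a‖ : ℝ) : ℂ) ^ 2) *
        (∑ ξ ∈ primitiveRoots d ℂ, ((‖∑ b ∈ B, ξ ^ b‖ : ℝ) : ℂ) ^ 2) /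
          ((Nat.totient d : ℂ))
      = ((∑ m ∈ N.divisors, cA m * c d (m : ℤ)) * (∑ n ∈ N.divisors, cB n * c d (n : ℤ))) /
          ((Nat.totient d : ℂ)) := by
    intro d hd
    rw [absSum_eq' hN hd A, absSum_eq' hN hd B]
  rw [Finset.sum_congr rfl hrw]
  have expand : ∀ d ∈ N.divisors,
      ((∑ m ∈ N.divisors, cA m * c d (m : ℤ)) * (∑ n ∈ N.divisors, cB n * c d (n : ℤ))) /
          ((Nat.totient d : ℂ))
      = ∑ m ∈ N.divisors, ∑ n ∈ N.divisors,
          cA m * cB n * (c d (m : ℤ) * c d (n : ℤ) / (Nat.totient d : ℂ)) := by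
    intro d hd
    rw [Finset.sum_mul_sum, Finset.sum_div]
    refine Finset.sum_congr rfl fun m _ => ?_
    rw [Finset.sum_div]
    refine Finset.sum_congr rfl fun n _ => ?_
    ring
  rw [Finset.sum_congr rfl expand]
  rw [Finset.sum_comm]
  have swap2 : ∀ m ∈ N.divisors,
      (∑ d ∈ N.divisors, ∑ n ∈ N.divisors,
        cA m * cB n * (c d (m : ℤ) * c d (n : ℤ) / (Nat.totient d : ℂ)))
      = ∑ n ∈ N.divisors, ∑ d ∈ N.divisors,
        cA m * cB n * (c d (m : ℤ) * c d (n : ℤ) / (Nat.totient d : ℂ)) :=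
    fun m _ => Finset.sum_comm
  rw [Finset.sum_congr rfl swap2]
  have inner : ∀ m ∈ N.divisors, ∀ n ∈ N.divisors,
      (∑ d ∈ N.divisors, cA m * cB n * (c d (m : ℤ) * c d (n : ℤ) / (Nat.totient d : ℂ)))
      = if m = n then cA m * cB n * ((N : ℂ) / (Nat.totient (N / m) : ℂ)) else 0 := by
    intro m hm n hn
    rw [← Finset.mul_sum, ortho_cols hN hm hn]
    by_cases h : m = n
    · rw [if_pos h, if_pos h]
    · rw [if_neg h, if_neg h, mul_zero]
  have step : ∀ m ∈ N.divisors,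
      (∑ n ∈ N.divisors, ∑ d ∈ N.divisors,
        cA m * cB n * (c d (m : ℤ) * c d (n : ℤ) / (Nat.totient d : ℂ)))
      = cA m * cB m * ((N : ℂ) / (Nat.totient (N / m) : ℂ)) := by
    intro m hm
    rw [Finset.sum_congr rfl (fun n hn => inner m hm n hn)]
    rw [Finset.sum_ite_eq N.divisors m
      (fun n => cA m * cB n * ((N : ℂ) / (Nat.totient (N / m) : ℂ))), if_pos hm]
  rw [Finset.sum_congr rfl step]
  rw [Finset.mul_sum]
  refine Finset.sum_congr rfl fun m hm => ?_
  have hφm := totient_Ndiv_ne_zero hN (Nat.mem_divisors.mp hm).1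
  field_simp
  rfl
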